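/- Let J₀ be a real N×P matrix, let Y, f₀ ∈ ℝ^N, set g₀ = f₀ − Y and Θ̂₀ = J₀ J₀ᵀ, and assume Θ̂₀ is invertible. Fix η > 0. Then the curve ω : [0,∞) → ℝ^P defined by ω(t) = − J₀ᵀ Θ̂₀⁻¹ (I − exp(−η Θ̂₀ t)) g₀ satisfies ω(0) = 0 and, for every t ≥ 0, the gradient-flow equation for the linearized network with squared loss: ω′(t) = − η J₀ᵀ (J₀ ω(t) + g₀). -/

import Mathlib

open Matrix

attribute [local instance] Matrix.linftyOpNormedAddCommGroup Matrix.linftyOpNormedRing Matrix.linftyOpNormedAlgebra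

/-- The closed-form curve
`ω(t) = − J₀ᵀ Θ̂₀⁻¹ (I − exp(−η Θ̂₀ t)) g₀` starts at `0` and satisfies the gradient-flow
equation `ω′(t) = − η J₀ᵀ (J₀ ω(t) + g₀)` of the linearized network with squared loss. -/
theorem linearized_param_flow_closed_form {N P : ℕ}
    (J₀ : Matrix (Fin N) (Fin P) ℝ) (Y f₀ g₀ : Fin N → ℝ) (hg₀ : g₀ = f₀ - Y)
    (Θ₀ : Matrix (Fin N) (Fin N) ℝ) (hΘ₀ : Θ₀ = J₀ * J₀ᵀ) (hΘ₀inv : IsUnit Θ₀)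
    (η : ℝ) (hη : 0 < η)
    (ω : ℝ → (Fin P → ℝ))
    (hω : ∀ t : ℝ, ω t =
      -(J₀ᵀ.mulVec (Θ₀⁻¹.mulVec
        ((1 - NormedSpace.exp (-(η * t) • Θ₀)).mulVec g₀)))) :
    ω 0 = 0 ∧
      ∀ t : ℝ, 0 ≤ t →
        HasDerivAt ω (-(η • (J₀ᵀ.mulVec (J₀.mulVec (ω t) + g₀)))) t := by
  have hdet : IsUnit Θ₀.det := (Matrix.isUnit_iff_isUnit_det Θ₀).mp hΘ₀inv
  constructor
  · rw [hω 0]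
    simp [NormedSpace.exp_zero]
  · intro t _
    -- linear map B : M ↦ J₀ᵀ ⬝ᵥ (Θ₀⁻¹ ⬝ᵥ (M ⬝ᵥ g₀))
    set B : Matrix (Fin N) (Fin N) ℝ →ₗ[ℝ] (Fin P → ℝ) :=
      { toFun := fun M => J₀ᵀ.mulVec (Θ₀⁻¹.mulVec (M.mulVec g₀))
        map_add' := by intro M M'; simp [Matrix.add_mulVec, Matrix.mulVec_add]
        map_smul' := by
          intro c M
          simp [Matrix.smul_mulVec, Matrix.mulVec_smul] } with hB
    have hωB : ∀ s : ℝ, ω s = B (NormedSpace.exp (-(η * s) • Θ₀)) - B 1 := by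
      intro s
      rw [hω s, hB]
      simp only [LinearMap.coe_mk, AddHom.coe_mk]
      rw [Matrix.sub_mulVec, Matrix.mulVec_sub, Matrix.mulVec_sub]
      abel
    -- derivative of exp part
    have hE : HasDerivAt (fun s : ℝ => NormedSpace.exp (-(η * s) • Θ₀))
        ((-η) • (NormedSpace.exp (-(η * t) • Θ₀) * Θ₀)) t := by
      have h1 : HasDerivAt (fun u : ℝ => NormedSpace.exp (u • Θ₀))
          (NormedSpace.exp ((-(η * t)) • Θ₀) * Θ₀) (-(η * t)) :=
        hasDerivAt_exp_smul_const Θ₀ (-(η * t))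
      have h2 : HasDerivAt (fun s : ℝ => -(η * s)) (-η) t := by
        have h := ((hasDerivAt_id t).const_mul η).neg; simp only [id, mul_one] at h; exact h
      exact h1.scomp t h2
    -- compose with continuous linear map B
    have hωd : HasDerivAt ω
        (B ((-η) • (NormedSpace.exp (-(η * t) • Θ₀) * Θ₀))) t := by
      have := (((LinearMap.toContinuousLinearMap B).hasFDerivAt.comp_hasDerivAt t hE).sub_const
        (B 1))
      simp only [Function.comp_def, LinearMap.coe_toContinuousLinearMap'] at this
      have heq : (fun s : ℝ => B (NormedSpace.exp (-(η * s) • Θ₀)) - B 1) = ω := by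
        funext s; rw [hωB s]
      rwa [heq] at this
    -- show the derivative values agree
    convert hωd using 1
    have hcomm : Commute (NormedSpace.exp (-(η * t) • Θ₀)) Θ₀ :=
      ((Commute.refl Θ₀).smul_left _).exp_left
    have key1 : Θ₀⁻¹ * (NormedSpace.exp (-(η * t) • Θ₀) * Θ₀)
        = NormedSpace.exp (-(η * t) • Θ₀) := by
      rw [hcomm.eq, ← mul_assoc, Matrix.nonsing_inv_mul Θ₀ hdet, one_mul]
    have key2 : J₀.mulVec (ω t) + g₀ = (NormedSpace.exp (-(η * t) • Θ₀)).mulVec g₀ := by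
      rw [hω t]
      rw [Matrix.mulVec_neg, Matrix.mulVec_mulVec, Matrix.mulVec_mulVec, ← hΘ₀]
      rw [Matrix.mul_nonsing_inv Θ₀ hdet, Matrix.one_mulVec, Matrix.sub_mulVec,
        Matrix.one_mulVec]
      abel
    rw [key2, hB]
    simp only [LinearMap.coe_mk, AddHom.coe_mk]
    simp only [Matrix.mulVec_smul, Matrix.mulVec_mulVec]
    rw [mul_smul_comm, key1, Matrix.mul_smul]
    simp [Matrix.smul_mulVec, Matrix.neg_mulVec]
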